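/- arXiv:2211.14549 — 5 statements merged into one kernel-verified Lean document; each statement's English description precedes it below -/
import Mathlib

section
/- For a nonnegative integer n and any integer k, the poly-Bernoulli number B_n^{(k)} satisfies B_n^{(k)} = (-1)^n * sum_{m=0}^{n} (-1)^m * m! * S(n,m) / (m+1)^k, where S(n,m) denotes the Stirling number of the second kind. -/
/-- Stirling numbers of the second kind. -/
def S2 : ℕ → ℕ → ℕ
  | 0, 0 => 1
  | 0, _ + 1 => 0
  | _ + 1, 0 => 0
  | n + 1, m + 1 => S2 n m + (m + 1) * S2 n (m + 1)

/-- The polylogarithm `Li_k(z) = ∑_{m ≥ 1} z^m / m^k` for integer index `k`. -/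
noncomputable def LiInt (k : ℤ) (z : ℝ) : ℝ :=
  ∑' m : ℕ, z ^ (m + 1) / ((m : ℝ) + 1) ^ k

open Finset

lemma S2_eq_zero : ∀ {n m : ℕ}, n < m → S2 n m = 0
  | 0, _ + 1, _ => rfl
  | n + 1, m + 1, h => by
    have h' : n < m := Nat.lt_of_succ_lt_succ h
    show S2 n m + (m + 1) * S2 n (m + 1) = 0
    rw [S2_eq_zero h', S2_eq_zero (h'.trans (Nat.lt_succ_self m))]
    simp

lemma S2_alt : ∀ n m : ℕ, ((-1 : ℤ))^m * m.factorial * S2 n m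
    = ∑ j ∈ range (m+1), (-1 : ℤ)^j * m.choose j * (j : ℤ)^n := by
  intro n
  induction n with
  | zero =>
    intro m
    have h := Int.alternating_sum_range_choose (n := m)
    match m with
    | 0 => simp [S2]
    | m+1 =>
      have h2 : (∑ j ∈ range (m+1+1), (-1:ℤ)^j * ((m+1).choose j) * (j:ℤ)^(0:ℕ))
          = ∑ j ∈ range (m+1+1), (-1:ℤ)^j * ((m+1).choose j) := by
        apply sum_congr rfl; intro j _; simp
      simp only [show S2 0 (m+1) = 0 from rfl, Nat.cast_zero, mul_zero]
      rw [h2, h]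
      simp
  | succ n ih =>
    intro m
    match m with
    | 0 => simp [show S2 (n+1) 0 = 0 from rfl, Finset.sum_range_one]
    | m+1 =>
      set A : ℤ := ∑ i ∈ range (m+1), (-1 : ℤ)^i * m.choose i * ((i : ℤ)+1)^n with hA
      have key0 : ∀ N : ℕ, ∑ j ∈ range (m+1), (-1 : ℤ)^j * m.choose j * (j:ℤ)^N
          = (∑ i ∈ range m, (-1:ℤ)^(i+1) * m.choose (i+1) * ((i:ℤ)+1)^N) + (0:ℤ)^N := by
        intro N
        rw [Finset.sum_range_succ']
        push_cast
        simp [pow_succ]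
      have ext0 : ∀ N : ℕ, ∑ i ∈ range (m+1), (-1:ℤ)^(i+1) * m.choose (i+1) * ((i:ℤ)+1)^N
          = ∑ i ∈ range m, (-1:ℤ)^(i+1) * m.choose (i+1) * ((i:ℤ)+1)^N := by
        intro N
        rw [Finset.sum_range_succ, Nat.choose_succ_self]
        simp
      have ha : ∑ j ∈ range (m+1+1), (-1 : ℤ)^j * (m+1).choose j * (j:ℤ)^n
          = (∑ j ∈ range (m+1), (-1 : ℤ)^j * m.choose j * (j:ℤ)^n) - A := by
        rw [Finset.sum_range_succ' (fun j => (-1 : ℤ)^j * (m+1).choose j * (j:ℤ)^n)]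
        push_cast
        have hterm : ∀ i ∈ range (m+1), (-1 : ℤ)^(i+1) * (m+1).choose (i+1) * ((i:ℤ)+1)^n
            = -((-1:ℤ)^i * m.choose i * ((i:ℤ)+1)^n)
              + ((-1:ℤ)^(i+1) * m.choose (i+1) * ((i:ℤ)+1)^n) := by
          intro i _
          rw [Nat.choose_succ_succ]
          push_cast
          ring
        rw [Finset.sum_congr rfl hterm, Finset.sum_add_distrib, ext0, key0 n,
          Finset.sum_neg_distrib, ← hA]
        simp only [Nat.choose_zero_right, Nat.cast_one, one_mul, pow_zero]
        ring
      have hb : ∑ j ∈ range (m+1+1), (-1 : ℤ)^j * (m+1).choose j * (j:ℤ)^(n+1)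
          = -((m:ℤ)+1) * A := by
        rw [Finset.sum_range_succ' (fun j => (-1 : ℤ)^j * (m+1).choose j * (j:ℤ)^(n+1))]
        push_cast
        have hterm : ∀ i ∈ range (m+1), (-1 : ℤ)^(i+1) * (m+1).choose (i+1) * ((i:ℤ)+1)^(n+1)
            = -((m:ℤ)+1) * ((-1:ℤ)^i * m.choose i * ((i:ℤ)+1)^n) := by
          intro i _
          have hc : ((i:ℤ)+1) * ((m+1).choose (i+1)) = ((m:ℤ)+1) * (m.choose i) := by
            have h0 := Nat.add_one_mul_choose_eq m i
            have h1 : ((m+1) * (m.choose i) : ℤ) = (((m+1).choose (i+1)) * ((i:ℤ)+1) : ℤ) := by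
              exact_mod_cast h0
            push_cast at h1
            linarith
          calc (-1 : ℤ)^(i+1) * (m+1).choose (i+1) * ((i:ℤ)+1)^(n+1)
              = (-1:ℤ)^(i+1) * (((i:ℤ)+1) * ((m+1).choose (i+1))) * ((i:ℤ)+1)^n := by ring
            _ = (-1:ℤ)^(i+1) * (((m:ℤ)+1) * (m.choose i)) * ((i:ℤ)+1)^n := by rw [hc]
            _ = -((m:ℤ)+1) * ((-1:ℤ)^i * m.choose i * ((i:ℤ)+1)^n) := by rw [pow_succ]; ring
        rw [Finset.sum_congr rfl hterm, ← Finset.mul_sum]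
        simp [hA]
      have hA' : A = (∑ j ∈ range (m+1), (-1 : ℤ)^j * m.choose j * (j:ℤ)^n)
          - ∑ j ∈ range (m+1+1), (-1 : ℤ)^j * (m+1).choose j * (j:ℤ)^n := by
        rw [ha]; ring
      rw [hb, hA', ← ih m, ← ih (m+1),
        show S2 (n+1) (m+1) = S2 n m + (m+1) * S2 n (m+1) from rfl,
        Nat.factorial_succ]
      push_cast
      ring
lemma S2_alt_real (n m : ℕ) : ((-1 : ℝ))^m * m.factorial * S2 n m
    = ∑ j ∈ range (m+1), (-1 : ℝ)^j * m.choose j * (j : ℝ)^n := by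
  exact_mod_cast S2_alt n m

lemma hasSum_exp_real (x : ℝ) : HasSum (fun n : ℕ => x^n / n.factorial) (Real.exp x) := by
  rw [Real.exp_eq_exp_ℝ]
  exact NormedSpace.expSeries_div_hasSum_exp x

lemma hasSum_one_sub_exp_neg_pow (m : ℕ) (t : ℝ) :
    HasSum (fun n : ℕ => (-1:ℝ)^(n+m) * m.factorial * S2 n m * t^n / n.factorial)
      ((1 - Real.exp (-t))^m) := by
  have h1 : ∀ j : ℕ, HasSum
      (fun n : ℕ => ((m.choose j : ℝ) * (-1)^j) * ((-(j:ℝ)*t)^n / n.factorial))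
      (((m.choose j : ℝ) * (-1)^j) * Real.exp (-(j:ℝ)*t)) :=
    fun j => (hasSum_exp_real (-(j:ℝ)*t)).mul_left _
  have h2 : HasSum
      (fun n : ℕ => ∑ j ∈ range (m+1), ((m.choose j : ℝ) * (-1)^j) * ((-(j:ℝ)*t)^n / n.factorial))
      (∑ j ∈ range (m+1), ((m.choose j : ℝ) * (-1)^j) * Real.exp (-(j:ℝ)*t)) :=
    hasSum_sum (fun j _ => h1 j)
  have hval : (∑ j ∈ range (m+1), ((m.choose j : ℝ) * (-1)^j) * Real.exp (-(j:ℝ)*t))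
      = (1 - Real.exp (-t))^m := by
    have expand : (1 - Real.exp (-t))^m
        = ∑ j ∈ range (m+1), (-Real.exp (-t))^j * 1^(m-j) * (m.choose j) := by
      rw [show (1 : ℝ) - Real.exp (-t) = -Real.exp (-t) + 1 by ring, add_pow]
    rw [expand]
    apply sum_congr rfl
    intro j _
    have hj : (-Real.exp (-t))^j = (-1:ℝ)^j * Real.exp ((j:ℝ) * (-t)) := by
      rw [neg_pow, Real.exp_nat_mul]
    rw [one_pow, mul_one, hj, show (j:ℝ) * (-t) = -(j:ℝ)*t by ring]
    ring
  have hcoef : ∀ n : ℕ,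
      (∑ j ∈ range (m+1), ((m.choose j : ℝ) * (-1)^j) * ((-(j:ℝ)*t)^n / n.factorial))
      = (-1:ℝ)^(n+m) * m.factorial * S2 n m * t^n / n.factorial := by
    intro n
    have : ∀ j ∈ range (m+1), ((m.choose j : ℝ) * (-1)^j) * ((-(j:ℝ)*t)^n / n.factorial)
        = ((-1:ℝ)^j * m.choose j * (j:ℝ)^n) * ((-1)^n * t^n / n.factorial) := by
      intro j _
      rw [show (-(j:ℝ)*t) = (-1) * ((j:ℝ)*t) by ring, mul_pow, mul_pow]
      ring
    rw [sum_congr rfl this, ← sum_mul, ← S2_alt_real]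
    rw [pow_add]
    ring
  rw [← hval]
  rw [funext hcoef] at h2
  exact h2

lemma neg_one_sq_pow (a : ℕ) : (-1:ℝ)^a * (-1:ℝ)^a = 1 := by
  rw [← pow_add, ← two_mul, pow_mul]
  norm_num

lemma hasSum_exp_sub_one_pow (m : ℕ) (t : ℝ) :
    HasSum (fun n : ℕ => (m.factorial : ℝ) * S2 n m * t^n / n.factorial)
      ((Real.exp t - 1)^m) := by
  have h := (hasSum_one_sub_exp_neg_pow m (-t)).mul_left ((-1:ℝ)^m)
  have hv : (-1:ℝ)^m * (1 - Real.exp (-(-t)))^m = (Real.exp t - 1)^m := by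
    rw [neg_neg, ← mul_pow]
    congr 1
    ring
  rw [hv] at h
  have hc : ∀ n : ℕ, (-1:ℝ)^m * ((-1:ℝ)^(n+m) * m.factorial * S2 n m * (-t)^n / n.factorial)
      = (m.factorial : ℝ) * S2 n m * t^n / n.factorial := by
    intro n
    calc (-1:ℝ)^m * ((-1:ℝ)^(n+m) * m.factorial * S2 n m * (-t)^n / n.factorial)
        = ((-1:ℝ)^m * (-1)^m) * ((-1:ℝ)^n * (-1)^n)
            * ((m.factorial : ℝ) * S2 n m * t^n / n.factorial) := by
          rw [pow_add, neg_pow]; ring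
      _ = (m.factorial : ℝ) * S2 n m * t^n / n.factorial := by
          rw [neg_one_sq_pow, neg_one_sq_pow]; ring
  rw [funext hc] at h
  exact h

lemma summable_geom_zpow (k : ℤ) {y : ℝ} (h0 : 0 ≤ y) (h1 : y < 1) :
    Summable (fun m : ℕ => y^m / ((m:ℝ)+1)^k) := by
  set K : ℕ := (-k).toNat with hK
  have hkK : -k ≤ (K : ℤ) := Int.self_le_toNat _
  have hmaj : ∀ m : ℕ, y^m / ((m:ℝ)+1)^k ≤ ((m:ℝ)+1)^K * y^m := by
    intro m
    have hb : (1:ℝ) ≤ (m:ℝ)+1 := by linarith [Nat.cast_nonneg (α := ℝ) m]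
    have h2 : ((m:ℝ)+1)^(-k) ≤ ((m:ℝ)+1)^(K:ℤ) := zpow_le_zpow_right₀ hb hkK
    rw [div_eq_mul_inv, ← zpow_neg, mul_comm]
    refine mul_le_mul_of_nonneg_right ?_ (pow_nonneg h0 m)
    rwa [zpow_natCast] at h2
  have hmajsum : Summable (fun m : ℕ => ((m:ℝ)+1)^K * y^m) := by
    have hrw : (fun m : ℕ => ((m:ℝ)+1)^K * y^m)
        = fun m : ℕ => ∑ i ∈ range (K+1), (K.choose i : ℝ) * ((m:ℝ)^i * y^m) := by
      funext m
      rw [add_pow, Finset.sum_mul]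
      apply Finset.sum_congr rfl
      intro i _
      rw [one_pow]
      ring
    rw [hrw]
    apply summable_sum
    intro i _
    exact (summable_pow_mul_geometric_of_norm_lt_one (R := ℝ) (r := y) i
      (by rwa [Real.norm_eq_abs, abs_of_nonneg h0])).mul_left _
  refine Summable.of_nonneg_of_le (fun m => ?_) hmaj hmajsum
  have : (0:ℝ) < ((m:ℝ)+1)^k := zpow_pos (by positivity) k
  exact div_nonneg (pow_nonneg h0 m) this.le

lemma HasSum.congr' {f g : ℕ → ℝ} {a : ℝ} (h : HasSum f a) (he : ∀ n, f n = g n) :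
    HasSum g a := (funext he : f = g) ▸ h

lemma hasSum_C (k : ℤ) (t : ℝ) (ht0 : 0 < t) (ht2 : Real.exp t < 2) :
    HasSum (fun n : ℕ => ((-1 : ℝ)^n * ∑ m ∈ Finset.range (n+1),
        (-1:ℝ)^m * (m.factorial : ℝ) * (S2 n m : ℝ) / ((m:ℝ)+1)^k) * t^n / (n.factorial : ℝ))
      (LiInt k (1 - Real.exp (-t)) / (1 - Real.exp (-t))) := by
  have hx0 : 0 < 1 - Real.exp (-t) := by
    have : Real.exp (-t) < Real.exp 0 := Real.exp_lt_exp.2 (by linarith)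
    rw [Real.exp_zero] at this; linarith
  have hy0 : (0:ℝ) ≤ Real.exp t - 1 := by
    have := Real.one_le_exp ht0.le; linarith
  have hy1 : Real.exp t - 1 < 1 := by linarith
  -- the unsigned summand
  have hpos : ∀ m n : ℕ, (0:ℝ) ≤ (m.factorial : ℝ) * (S2 n m : ℝ) * t^n / (n.factorial : ℝ)
      / ((m:ℝ)+1)^k := by
    intro m n
    have hz : (0:ℝ) < ((m:ℝ)+1)^k := zpow_pos (by positivity) k
    have h1 : (0:ℝ) ≤ (m.factorial : ℝ) * (S2 n m : ℝ) * t^n :=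
      mul_nonneg (mul_nonneg (Nat.cast_nonneg _) (Nat.cast_nonneg _)) (pow_nonneg ht0.le n)
    exact div_nonneg (div_nonneg h1 (Nat.cast_nonneg _)) hz.le
  -- fiberwise (over m) hasSum for the unsigned family
  have hfibh : ∀ m : ℕ, HasSum
      (fun n : ℕ => (m.factorial : ℝ) * (S2 n m : ℝ) * t^n / (n.factorial : ℝ) / ((m:ℝ)+1)^k)
      ((Real.exp t - 1)^m / ((m:ℝ)+1)^k) :=
    fun m => (hasSum_exp_sub_one_pow m t).div_const _
  -- fiberwise (over m) hasSum for the signed family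
  have hfib : ∀ m : ℕ, HasSum
      (fun n : ℕ => (-1:ℝ)^(n+m) * ((m.factorial : ℝ) * (S2 n m : ℝ) * t^n / (n.factorial : ℝ)
        / ((m:ℝ)+1)^k))
      ((1 - Real.exp (-t))^m / ((m:ℝ)+1)^k) := by
    intro m
    exact ((hasSum_one_sub_exp_neg_pow m t).div_const _).congr' (fun n => by ring)
  -- summability of the unsigned double family
  have hsumh : Summable (fun p : ℕ × ℕ =>
      (p.1.factorial : ℝ) * (S2 p.2 p.1 : ℝ) * t^p.2 / (p.2.factorial : ℝ) / ((p.1:ℝ)+1)^k) := by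
    rw [summable_prod_of_nonneg (fun p => hpos p.1 p.2)]
    constructor
    · exact fun m => (hfibh m).summable
    · exact (summable_geom_zpow k hy0 hy1).congr (fun m => ((hfibh m).tsum_eq).symm)
  -- summability of the signed double family
  have hsumg : Summable (fun p : ℕ × ℕ =>
      (-1:ℝ)^(p.2+p.1) * ((p.1.factorial : ℝ) * (S2 p.2 p.1 : ℝ) * t^p.2 / (p.2.factorial : ℝ)
        / ((p.1:ℝ)+1)^k)) := by
    rw [← summable_abs_iff]
    apply hsumh.congr
    intro p
    rw [abs_mul, abs_pow, abs_neg, abs_one, one_pow, one_mul, abs_of_nonneg (hpos p.1 p.2)]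
  -- total sum over m
  have hS : HasSum (fun m : ℕ => (1 - Real.exp (-t))^m / ((m:ℝ)+1)^k)
      (∑' p : ℕ × ℕ, (-1:ℝ)^(p.2+p.1) * ((p.1.factorial : ℝ) * (S2 p.2 p.1 : ℝ) * t^p.2
        / (p.2.factorial : ℝ) / ((p.1:ℝ)+1)^k)) :=
    hsumg.hasSum.prod_fiberwise hfib
  have hLi : LiInt k (1 - Real.exp (-t)) = (1 - Real.exp (-t)) *
      (∑' p : ℕ × ℕ, (-1:ℝ)^(p.2+p.1) * ((p.1.factorial : ℝ) * (S2 p.2 p.1 : ℝ) * t^p.2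
        / (p.2.factorial : ℝ) / ((p.1:ℝ)+1)^k)) := by
    have h2 : HasSum (fun m : ℕ => (1 - Real.exp (-t))^(m+1) / ((m:ℝ)+1)^k)
        ((1 - Real.exp (-t)) * (∑' p : ℕ × ℕ, (-1:ℝ)^(p.2+p.1) * ((p.1.factorial : ℝ)
          * (S2 p.2 p.1 : ℝ) * t^p.2 / (p.2.factorial : ℝ) / ((p.1:ℝ)+1)^k))) :=
      (hS.mul_left (1 - Real.exp (-t))).congr' (fun m => by rw [pow_succ']; ring)
    rw [LiInt]
    exact h2.tsum_eq
  -- fibers over n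
  have hfibn : ∀ n : ℕ, HasSum (fun m : ℕ =>
      (-1:ℝ)^(n+m) * ((m.factorial : ℝ) * (S2 n m : ℝ) * t^n / (n.factorial : ℝ)
        / ((m:ℝ)+1)^k))
      (((-1 : ℝ)^n * ∑ m ∈ Finset.range (n+1),
        (-1:ℝ)^m * (m.factorial : ℝ) * (S2 n m : ℝ) / ((m:ℝ)+1)^k) * t^n / (n.factorial : ℝ)) := by
    intro n
    have hz : ∀ m ∉ Finset.range (n+1),
        (-1:ℝ)^(n+m) * ((m.factorial : ℝ) * (S2 n m : ℝ) * t^n / (n.factorial : ℝ)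
          / ((m:ℝ)+1)^k) = 0 := by
      intro m hm
      rw [S2_eq_zero (by simpa using Finset.mem_range.not.1 hm)]
      simp
    have h3 := hasSum_sum_of_ne_finset_zero (L := SummationFilter.unconditional ℕ) hz
    have h4 : (∑ m ∈ Finset.range (n+1), (-1:ℝ)^(n+m) * ((m.factorial : ℝ) * (S2 n m : ℝ) * t^n
        / (n.factorial : ℝ) / ((m:ℝ)+1)^k))
        = ((-1 : ℝ)^n * ∑ m ∈ Finset.range (n+1),
          (-1:ℝ)^m * (m.factorial : ℝ) * (S2 n m : ℝ) / ((m:ℝ)+1)^k) * t^n / (n.factorial : ℝ) := by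
      calc ∑ m ∈ Finset.range (n+1), (-1:ℝ)^(n+m) * ((m.factorial : ℝ) * (S2 n m : ℝ) * t^n
            / (n.factorial : ℝ) / ((m:ℝ)+1)^k)
          = ∑ m ∈ Finset.range (n+1), ((-1:ℝ)^m * (m.factorial : ℝ) * (S2 n m : ℝ)
              / ((m:ℝ)+1)^k) * ((-1:ℝ)^n * t^n / (n.factorial : ℝ)) :=
            Finset.sum_congr rfl (fun m _ => by rw [pow_add]; ring)
        _ = (∑ m ∈ Finset.range (n+1), (-1:ℝ)^m * (m.factorial : ℝ) * (S2 n m : ℝ)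
              / ((m:ℝ)+1)^k) * ((-1:ℝ)^n * t^n / (n.factorial : ℝ)) := by
            rw [Finset.sum_mul]
        _ = ((-1 : ℝ)^n * ∑ m ∈ Finset.range (n+1), (-1:ℝ)^m * (m.factorial : ℝ)
              * (S2 n m : ℝ) / ((m:ℝ)+1)^k) * t^n / (n.factorial : ℝ) := by ring
    rw [h4] at h3
    exact h3
  -- conclude
  have hswap : HasSum (fun p : ℕ × ℕ => (-1:ℝ)^(p.1+p.2) * ((p.2.factorial : ℝ)
      * (S2 p.1 p.2 : ℝ) * t^p.1 / (p.1.factorial : ℝ) / ((p.2:ℝ)+1)^k))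
      (∑' p : ℕ × ℕ, (-1:ℝ)^(p.2+p.1) * ((p.1.factorial : ℝ) * (S2 p.2 p.1 : ℝ) * t^p.2
        / (p.2.factorial : ℝ) / ((p.1:ℝ)+1)^k)) := by
    exact ((Equiv.prodComm ℕ ℕ).hasSum_iff).2 hsumg.hasSum
  have hfinal := hswap.prod_fiberwise (fun n => by
    have := hfibn n
    exact this.congr' (fun m => by rw [add_comm n m]))
  rw [hLi]
  have hxne : (1 - Real.exp (-t)) ≠ 0 := ne_of_gt hx0
  rw [mul_comm, mul_div_assoc, div_self hxne, mul_one]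
  exact hfinal

lemma coeff_eq_zero (r' : ℝ) (hr' : 0 < r') (a : ℕ → ℝ)
    (h : ∀ t : ℝ, 0 < t → t < r' → HasSum (fun n : ℕ => a n * t^n) 0) : ∀ N, a N = 0 := by
  obtain ⟨t0, ht0, ht0r⟩ : ∃ t0 : ℝ, 0 < t0 ∧ t0 < r' := ⟨r'/2, by linarith, by linarith⟩
  -- bound on coefficients
  obtain ⟨M, hM⟩ : ∃ M : ℝ, ∀ n : ℕ, |a n| * t0^n ≤ M := by
    have hsum := (h t0 ht0 ht0r).summable
    have htend := hsum.tendsto_atTop_zero.abs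
    rw [abs_zero] at htend
    obtain ⟨M, hM⟩ := htend.bddAbove_range
    refine ⟨M, fun n => ?_⟩
    have := hM (Set.mem_range_self n)
    rwa [abs_mul, abs_of_nonneg (pow_nonneg ht0.le n)] at this
  have hM0 : 0 ≤ M := le_trans (by positivity) (hM 0)
  -- main induction step
  have key : ∀ N : ℕ, (∀ t : ℝ, 0 < t → t < r' → HasSum (fun n : ℕ => a (n+N) * t^n) 0) →
      a N = 0 ∧ ∀ t : ℝ, 0 < t → t < r' → HasSum (fun n : ℕ => a (n+(N+1)) * t^n) 0 := by
    intro N hQ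
    have hpeel : ∀ t : ℝ, 0 < t → t < r' →
        HasSum (fun n : ℕ => a (n+1+N) * t^(n+1)) (-(a N)) := by
      intro t ht htr
      have hs := hQ t ht htr
      have h1 : HasSum (fun n : ℕ => a (n+1+N) * t^(n+1)) (-(a N * t^0)) := by
        refine (hasSum_nat_add_iff (f := fun n : ℕ => a (n+N) * t^n) 1).2 ?_
        simpa using hs
      simpa using h1
    have haN : a N = 0 := by
      have hbound : ∀ t : ℝ, 0 < t → t ≤ t0/2 → |a N| ≤ (2*M/t0^(N+1)) * t := by
        intro t ht ht2
        have htr : t < r' := by linarith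
        have hq0 : (0:ℝ) ≤ t/t0 := by positivity
        have hq1 : t/t0 < 1 := by rw [div_lt_one ht0]; linarith
        have hgeo : HasSum (fun n : ℕ => (M/t0^(N+1)*t) * (t/t0)^n)
            ((M/t0^(N+1)*t) * (1 - t/t0)⁻¹) :=
          (hasSum_geometric_of_lt_one hq0 hq1).mul_left _
        have hle : ∀ n : ℕ, ‖a (n+1+N) * t^(n+1)‖ ≤ (M/t0^(N+1)*t) * (t/t0)^n := by
          intro n
          have h2 : |a (n+1+N)| * t0^(n+1+N) ≤ M := hM (n+1+N)
          have h3 : (0:ℝ) < t0^(n+1+N) := pow_pos ht0 _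
          have h4 : |a (n+1+N)| ≤ M / t0^(n+1+N) := by
            rw [le_div_iff₀ h3]; exact h2
          rw [Real.norm_eq_abs, abs_mul, abs_of_nonneg (pow_nonneg ht.le _)]
          have h5 : |a (n+1+N)| * t^(n+1) ≤ (M / t0^(n+1+N)) * t^(n+1) :=
            mul_le_mul_of_nonneg_right h4 (pow_nonneg ht.le _)
          refine h5.trans (le_of_eq ?_)
          have e1 : t0^(n+1+N) = t0^(N+1) * t0^n := by
            rw [← pow_add]; congr 1; omega
          have hne1 : t0^(N+1) ≠ 0 := (pow_pos ht0 _).ne'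
          have hne2 : t0^n ≠ 0 := (pow_pos ht0 _).ne'
          rw [e1, div_pow, pow_succ]
          field_simp
          ring
        have h6 : |a N| ≤ (M/t0^(N+1)*t) * (1 - t/t0)⁻¹ := by
          have h7 := tsum_of_norm_bounded hgeo hle
          rw [(hpeel t ht htr).tsum_eq] at h7
          rwa [Real.norm_eq_abs, abs_neg] at h7
        have h81 : t/t0 ≤ 1/2 := by
          rw [div_le_iff₀ ht0]; linarith
        have h82 : (1:ℝ)/2 ≤ 1 - t/t0 := by linarith
        have h8 : (1 - t/t0)⁻¹ ≤ 2 := by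
          have := inv_anti₀ (by norm_num : (0:ℝ) < 1/2) h82
          simpa using this
        have h9 : (M/t0^(N+1)*t) * (1 - t/t0)⁻¹ ≤ (M/t0^(N+1)*t) * 2 :=
          mul_le_mul_of_nonneg_left h8 (by positivity)
        refine h6.trans (h9.trans (le_of_eq (by ring)))
      by_contra habs
      have hpos : 0 < |a N| := abs_pos.2 habs
      set K : ℝ := 2*M/t0^(N+1) with hK
      have hK0 : 0 ≤ K := by positivity
      set t : ℝ := min (t0/2) (|a N|/(2*(K+1))) with htdef
      have ht : 0 < t := lt_min (by positivity) (by positivity)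
      have ht2 : t ≤ t0/2 := min_le_left _ _
      have h10 := hbound t ht ht2
      have h11 : t ≤ |a N|/(2*(K+1)) := min_le_right _ _
      have h12 : K * t ≤ K * (|a N|/(2*(K+1))) := mul_le_mul_of_nonneg_left h11 hK0
      have h13 : K * (|a N|/(2*(K+1))) < |a N| := by
        rw [mul_div_assoc']
        rw [div_lt_iff₀ (by positivity : (0:ℝ) < 2*(K+1))]
        nlinarith
      nlinarith
    refine ⟨haN, fun t ht htr => ?_⟩
    have hp := hpeel t ht htr
    rw [haN, neg_zero] at hp
    have hp2 := hp.div_const t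
    rw [zero_div] at hp2
    refine hp2.congr' (fun n => ?_)
    rw [show n+1+N = n+(N+1) from by omega, pow_succ, mul_div_assoc, mul_div_assoc,
      div_self ht.ne', mul_one]
  have QN : ∀ N : ℕ, ∀ t : ℝ, 0 < t → t < r' → HasSum (fun n : ℕ => a (n+N) * t^n) 0 := by
    intro N
    induction N with
    | zero => simpa using h
    | succ N ih => exact (key N ih).2
  exact fun N => (key N (QN N)).1

/-- Kaneko's explicit formula for poly-Bernoulli numbers in terms of Stirling
numbers of the second kind. -/
theorem polyBernoulli_explicit (k : ℤ) (B : ℕ → ℝ) (r : ℝ) (hr : 0 < r)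
    (hB : ∀ t : ℝ, 0 < t → t < r →
      HasSum (fun n : ℕ => B n * t ^ n / (Nat.factorial n : ℝ))
        (LiInt k (1 - Real.exp (-t)) / (1 - Real.exp (-t))))
    (n : ℕ) :
    B n = (-1 : ℝ) ^ n * ∑ m ∈ Finset.range (n + 1),
      (-1 : ℝ) ^ m * (Nat.factorial m : ℝ) * (S2 n m : ℝ) / ((m : ℝ) + 1) ^ k := by
  set C : ℕ → ℝ := fun n => (-1 : ℝ) ^ n * ∑ m ∈ Finset.range (n + 1),
      (-1 : ℝ) ^ m * (Nat.factorial m : ℝ) * (S2 n m : ℝ) / ((m : ℝ) + 1) ^ k with hC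
  have hlog : 0 < Real.log 2 := Real.log_pos (by norm_num)
  set r' : ℝ := min r (Real.log 2) with hr'def
  have hr' : 0 < r' := lt_min hr hlog
  have hzero : ∀ t : ℝ, 0 < t → t < r' →
      HasSum (fun n : ℕ => (B n / (Nat.factorial n : ℝ) - C n / (Nat.factorial n : ℝ)) * t^n)
        0 := by
    intro t ht htr
    have ht2 : Real.exp t < 2 := by
      have h1 : t < Real.log 2 := lt_of_lt_of_le htr (min_le_right _ _)
      have := Real.exp_lt_exp.2 h1
      rwa [Real.exp_log (by norm_num)] at this
    have h1 := hB t ht (lt_of_lt_of_le htr (min_le_left _ _))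
    have h2 := hasSum_C k t ht ht2
    have h3 := h1.sub h2
    rw [sub_self] at h3
    exact h3.congr' (fun n => by rw [hC]; ring)
  have hzero2 := coeff_eq_zero r' hr' _ hzero n
  have hf : ((Nat.factorial n : ℝ)) ≠ 0 := Nat.cast_ne_zero.2 (Nat.factorial_ne_zero n)
  rw [sub_eq_zero, div_eq_div_iff hf hf] at hzero2
  exact mul_right_cancel₀ hf hzero2
end

section
/- Let k1, k2, N be positive integers and p a prime. If n1, n2, m2 >= N with n2 ≡ m2 (mod p^{N-1}(p-1)), then B_{n1,n2}^{(-k1,-k2)} ≡ B_{n1,m2}^{(-k1,-k2)} (mod p^N). -/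
/-- Double-indexed poly-Bernoulli number with negative upper indices
`B_{n1,n2}^{(-k1,-k2)}`, via the dual explicit formula
`B_{n1,n2}^{(-k1,-k2)} = B_{k1,k2}^{(-n1,-n2)}`. -/
def B2negD (n1 n2 k1 k2 : ℕ) : ℤ :=
  ∑ l1 ∈ Finset.range (k1 + k2 + 1), ∑ l2 ∈ Finset.range (k1 + k2 + 1),
    (-1 : ℤ) ^ (l1 + l2 + k1 + k2) * (Nat.factorial l1 : ℤ) * (Nat.factorial l2 : ℤ) *
      ((l1 : ℤ) + 1) ^ n1 * ((l1 : ℤ) + (l2 : ℤ) + 2) ^ n2 *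
      ∑ h ∈ Finset.range (k1 + k2 + 1),
        (S2 h l1 : ℤ) * (S2 (k1 + k2 - h) l2 : ℤ) *
          (if k1 ≤ h then (Nat.choose k2 (h - k1) : ℤ) else 0)

lemma pow_modEq_pow_of_modEq (p N n m : ℕ) (hp : p.Prime) (hN : 0 < N)
    (hn : N ≤ n) (hm : N ≤ m) (h : n ≡ m [MOD p ^ (N - 1) * (p - 1)]) (a : ℤ) :
    a ^ n ≡ a ^ m [ZMOD (p : ℤ) ^ N] := by
  by_cases hd : (p : ℤ) ∣ a
  · have h1 : ((p : ℤ) ^ N) ∣ a ^ n :=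
      dvd_trans (pow_dvd_pow_of_dvd hd N) (pow_dvd_pow a hn)
    have h2 : ((p : ℤ) ^ N) ∣ a ^ m :=
      dvd_trans (pow_dvd_pow_of_dvd hd N) (pow_dvd_pow a hm)
    exact (Int.modEq_zero_iff_dvd.mpr h1).trans (Int.modEq_zero_iff_dvd.mpr h2).symm
  · haveI : NeZero (p ^ N) := ⟨pow_ne_zero N hp.pos.ne'⟩
    have hmod : ((p : ℤ) ^ N) = ((p ^ N : ℕ) : ℤ) := by push_cast; ring
    rw [hmod, ← ZMod.intCast_eq_intCast_iff]
    push_cast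
    have hcop : IsCoprime ((p : ℤ) ^ N) a :=
      ((Nat.prime_iff_prime_int.mp hp).coprime_iff_not_dvd.mpr hd).pow_left
    obtain ⟨u, v, huv⟩ := hcop
    have hunit : IsUnit ((a : ZMod (p ^ N))) := by
      apply IsUnit.of_mul_eq_one ((v : ZMod (p ^ N)))
      have : ((u * (p : ℤ) ^ N + v * a : ℤ) : ZMod (p ^ N)) = ((1 : ℤ) : ZMod (p ^ N)) := by
        rw [huv]
      push_cast at this
      have hz : ((p : ZMod (p ^ N))) ^ N = 0 := by
        rw [← Nat.cast_pow, ZMod.natCast_self]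
      rw [hz] at this
      rw [mul_comm]
      simpa using this
    obtain ⟨w, hw⟩ := hunit
    have horder : orderOf w ∣ p ^ (N - 1) * (p - 1) := by
      rw [← Nat.totient_prime_pow hp hN]
      exact orderOf_dvd_of_pow_eq_one (ZMod.pow_totient w)
    have : w ^ n = w ^ m := pow_eq_pow_iff_modEq.mpr (h.of_dvd horder)
    rw [← hw, ← Units.val_pow_eq_pow_val, ← Units.val_pow_eq_pow_val, this]

/-- Periodicity of double-indexed poly-Bernoulli numbers in the second index. -/
theorem doublePolyBernoulli_periodicity_snd (k1 k2 N : ℕ)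
    (hk1 : 0 < k1) (hk2 : 0 < k2) (hN : 0 < N) (p : ℕ) (hp : p.Prime)
    (n1 n2 m2 : ℕ) (hn1 : N ≤ n1) (hn2 : N ≤ n2) (hm2 : N ≤ m2)
    (h : n2 ≡ m2 [MOD p ^ (N - 1) * (p - 1)]) :
    B2negD n1 n2 k1 k2 ≡ B2negD n1 m2 k1 k2 [ZMOD (p : ℤ) ^ N] := by
  have hmod : ((p : ℤ) ^ N) = ((p ^ N : ℕ) : ℤ) := by push_cast; ring
  rw [hmod, ← ZMod.intCast_eq_intCast_iff]
  unfold B2negD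
  push_cast
  refine Finset.sum_congr rfl fun l1 _ => Finset.sum_congr rfl fun l2 _ => ?_
  have key := pow_modEq_pow_of_modEq p N n2 m2 hp hN hn2 hm2 h ((l1 : ℤ) + (l2 : ℤ) + 2)
  rw [hmod, ← ZMod.intCast_eq_intCast_iff] at key
  push_cast at key
  rw [key]
end

section
/- Let k1, k2, N be positive integers and p a prime. If n1, n2, m1 >= N with n1 ≡ m1 (mod p^{N-1}(p-1)), then B_{n1,n2}^{(-k1,-k2)} ≡ B_{m1,n2}^{(-k1,-k2)} (mod p^N). -/
lemma pow_exp_mod (p N : ℕ) (hp : p.Prime) (hN : 0 < N) (a : ℤ) {n m : ℕ}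
    (hn : N ≤ n) (hm : N ≤ m) (h : n ≡ m [MOD p ^ (N - 1) * (p - 1)]) :
    a ^ n ≡ a ^ m [ZMOD (p : ℤ) ^ N] := by
  have hT : p ^ (N - 1) * (p - 1) = Nat.totient (p ^ N) := (Nat.totient_prime_pow hp hN).symm
  by_cases hdvd : (p : ℤ) ∣ a
  · have key : ∀ k : ℕ, N ≤ k → a ^ k ≡ 0 [ZMOD (p : ℤ) ^ N] := by
      intro k hk
      have h1 : (p : ℤ) ^ N ∣ a ^ k :=
        dvd_trans (pow_dvd_pow_of_dvd hdvd N) (pow_dvd_pow a hk)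
      exact Int.modEq_zero_iff_dvd.mpr h1
    exact (key n hn).trans (key m hm).symm
  · -- a is a unit mod p^N
    have hcop : Nat.Coprime a.natAbs (p ^ N) := by
      apply Nat.Coprime.pow_right
      rw [Nat.coprime_comm]
      refine (Nat.Prime.coprime_iff_not_dvd hp).mpr ?_
      intro hd
      exact hdvd (Int.dvd_natAbs.mp (Int.natCast_dvd_natCast.mpr hd))
    have hu : IsUnit ((a : ZMod (p ^ N))) := by
      rcases Int.natAbs_eq a with ha | ha
      · rw [ha, Int.cast_natCast]
        exact (ZMod.isUnit_iff_coprime _ _).mpr hcop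
      · rw [ha, Int.cast_neg, Int.cast_natCast]
        exact ((ZMod.isUnit_iff_coprime _ _).mpr hcop).neg
    obtain ⟨u, hu⟩ := hu
    have huT : u ^ (p ^ (N - 1) * (p - 1)) = 1 := by
      rw [hT]; exact ZMod.pow_totient u
    have key : ∀ n m : ℕ, m ≤ n → n ≡ m [MOD p ^ (N - 1) * (p - 1)] → u ^ n = u ^ m := by
      intro n m hmn hnm
      obtain ⟨c, hc⟩ := (Nat.modEq_iff_dvd' hmn).mp hnm.symm
      have : n = m + (p ^ (N - 1) * (p - 1)) * c := by omega
      rw [this, pow_add, pow_mul, huT, one_pow, mul_one]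
    have hun : u ^ n = u ^ m := by
      rcases le_total m n with hle | hle
      · exact key n m hle h
      · exact (key m n hle h.symm).symm
    have : ((a : ZMod (p ^ N)))^ n = ((a : ZMod (p ^ N))) ^ m := by
      rw [← hu, ← Units.val_pow_eq_pow_val, ← Units.val_pow_eq_pow_val, hun]
    have := this
    rw [show ((p : ℤ) ^ N) = ((p ^ N : ℕ) : ℤ) by push_cast; ring, ← ZMod.intCast_eq_intCast_iff]
    push_cast
    exact this

lemma modEq_sum' {ι : Type*} {s : Finset ι} {f g : ι → ℤ} {n : ℤ}
    (h : ∀ i ∈ s, f i ≡ g i [ZMOD n]) : ∑ i ∈ s, f i ≡ ∑ i ∈ s, g i [ZMOD n] := by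
  classical
  induction s using Finset.induction_on with
  | empty => simp [Int.ModEq.refl]
  | insert _ _ hx ih =>
    rw [Finset.sum_insert hx, Finset.sum_insert hx]
    exact (h _ (Finset.mem_insert_self _ _)).add (ih fun i hi => h i (Finset.mem_insert_of_mem hi))

/-- Periodicity of double-indexed poly-Bernoulli numbers in the first index. -/
theorem doublePolyBernoulli_periodicity_fst (k1 k2 N : ℕ)
    (hk1 : 0 < k1) (hk2 : 0 < k2) (hN : 0 < N) (p : ℕ) (hp : p.Prime)
    (n1 n2 m1 : ℕ) (hn1 : N ≤ n1) (hn2 : N ≤ n2) (hm1 : N ≤ m1)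
    (h : n1 ≡ m1 [MOD p ^ (N - 1) * (p - 1)]) :
    B2negD n1 n2 k1 k2 ≡ B2negD m1 n2 k1 k2 [ZMOD (p : ℤ) ^ N] := by
  unfold B2negD
  apply modEq_sum'
  intro l1 _
  apply modEq_sum'
  intro l2 _
  exact (((pow_exp_mod p N hp hN ((l1 : ℤ) + 1) hn1 hm1 h).mul_left
    ((-1 : ℤ) ^ (l1 + l2 + k1 + k2) * (Nat.factorial l1 : ℤ) *
      (Nat.factorial l2 : ℤ))).mul_right _).mul_right _
end

section
/- Let k1, k2, N be positive integers and p a prime. For integers n1, n2 >= N, sum_{i=0}^{φ(p^N)-1} B_{n1+i, n2}^{(-k1,-k2)} ≡ 0 (mod p^N). -/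
/-- Splitting a geometric sum of length `c * d`. -/
lemma splitsum (a : ℤ) (c d : ℕ) :
    ∑ i ∈ Finset.range (c * d), a ^ i
      = (∑ i ∈ Finset.range c, a ^ i) * (∑ j ∈ Finset.range d, (a ^ c) ^ j) := by
  induction d with
  | zero => simp
  | succ d ih =>
    rw [Nat.mul_succ, Finset.sum_range_add, ih,
      Finset.sum_range_succ (f := fun j => (a ^ c) ^ j)]
    simp only [pow_add, ← Finset.mul_sum, pow_mul]
    ring

/-- If `c ∣ b - 1` then `c` divides every `b^j - 1`, hence the geometric sum minus its length. -/
lemma dvd_geom_sum_sub (c b : ℤ) (h : c ∣ b - 1) (m : ℕ) :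
    c ∣ (∑ j ∈ Finset.range m, b ^ j) - m := by
  have : (∑ j ∈ Finset.range m, b ^ j) - m = ∑ j ∈ Finset.range m, (b ^ j - 1) := by
    rw [Finset.sum_sub_distrib]; simp
  rw [this]
  exact Finset.dvd_sum fun j _ => h.trans (by simpa using sub_dvd_pow_sub_pow b 1 j)

lemma dvd_geom_sum_len (p : ℕ) (b : ℤ) (h : (p : ℤ) ∣ b - 1) :
    (p : ℤ) ∣ ∑ j ∈ Finset.range p, b ^ j := by
  have h1 := dvd_geom_sum_sub (p : ℤ) b h p
  have h2 := dvd_add h1 (dvd_refl (p : ℤ))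
  simpa using h2

/-- `p^e` divides the geometric sum of length `p^e` when `a ≡ 1 (mod p)`. -/
lemma pow_dvd_geom_sum (p : ℕ) {a : ℤ} (h : (p : ℤ) ∣ a - 1) (e : ℕ) :
    (p : ℤ) ^ e ∣ ∑ i ∈ Finset.range (p ^ e), a ^ i := by
  induction e with
  | zero => simp
  | succ e ih =>
    have hb : (p : ℤ) ∣ a ^ (p ^ e) - 1 :=
      h.trans (by simpa using sub_dvd_pow_sub_pow a 1 (p ^ e))
    rw [pow_succ p e, splitsum, pow_succ]
    exact mul_dvd_mul ih (dvd_geom_sum_len p _ hb)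

/-- Euler's theorem for integers, prime power modulus. -/
lemma euler_int (p : ℕ) (hp : p.Prime) {a : ℤ} (ha : ¬ (p : ℤ) ∣ a) :
    ∀ N, 0 < N → (p : ℤ) ^ N ∣ a ^ ((p ^ N).totient) - 1 := by
  have hpz : Prime (p : ℤ) := by
    rw [Int.prime_iff_natAbs_prime]; simpa using hp
  have hco : IsCoprime a (p : ℤ) := by
    exact ((hpz.coprime_iff_not_dvd.mpr ha)).symm
  intro N hN
  induction N with
  | zero => omega
  | succ N ih =>
    rcases Nat.eq_zero_or_pos N with h0 | hNpos
    · subst h0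
      have := Int.ModEq.pow_card_sub_one_eq_one hp hco
      have hd : ((p : ℤ) : ℤ) ∣ 1 - a ^ (p - 1) := this.dvd
      have ht : (p ^ 1).totient = p - 1 := by
        rw [pow_one, Nat.totient_prime hp]
      rw [ht, pow_one]
      have := dvd_neg.mpr hd
      rwa [neg_sub] at this
    · have htot : (p ^ (N + 1)).totient = (p ^ N).totient * p := by
        rw [Nat.totient_prime_pow hp (Nat.succ_pos N), Nat.totient_prime_pow hp hNpos]
        have : N + 1 - 1 = (N - 1) + 1 := by omega
        rw [this, pow_succ]
        ring
      have ihN := ih hNpos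
      set b : ℤ := a ^ ((p ^ N).totient) with hb
      have hgeom : (∑ i ∈ Finset.range p, b ^ i) * (b - 1) = b ^ p - 1 := geom_sum_mul b p
      have hpb : (p : ℤ) ∣ b - 1 := (dvd_pow_self (p : ℤ) hNpos.ne').trans ihN
      have hdvd : (p : ℤ) ^ (N + 1) ∣ (∑ i ∈ Finset.range p, b ^ i) * (b - 1) := by
        rw [pow_succ']
        exact mul_dvd_mul (dvd_geom_sum_len p b hpb) ihN
      rw [htot, pow_mul, ← hb, ← hgeom]
      exact hdvd

/-- Key divisibility: for `l ≥ 1`, `p^N ∣ l! · ∑_{i<φ(p^N)} (l+1)^{n+i}` whenever `N ≤ n`. -/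
lemma keydvd (p N : ℕ) (hp : p.Prime) (hN : 0 < N) (l n : ℕ) (hl : 0 < l) (hn : N ≤ n) :
    (p : ℤ) ^ N ∣ (Nat.factorial l : ℤ) *
      ∑ i ∈ Finset.range ((p ^ N).totient), ((l : ℤ) + 1) ^ (n + i) := by
  set a : ℤ := (l : ℤ) + 1 with ha
  have hsum : ∑ i ∈ Finset.range ((p ^ N).totient), a ^ (n + i)
      = a ^ n * ∑ i ∈ Finset.range ((p ^ N).totient), a ^ i := by
    rw [Finset.mul_sum]
    exact Finset.sum_congr rfl fun i _ => pow_add a n i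
  rw [hsum]
  by_cases hpa : (p : ℤ) ∣ a
  · have h1 : (p : ℤ) ^ N ∣ a ^ n :=
      (pow_dvd_pow_of_dvd hpa N).trans (pow_dvd_pow a hn)
    exact Dvd.dvd.mul_left (h1.mul_right _) _
  · by_cases hpl : (p : ℤ) ∣ (l : ℤ)
    · have h1 : (p : ℤ) ∣ (Nat.factorial l : ℤ) := by
        have hpl' : p ∣ l := by exact_mod_cast hpl
        have : p ∣ Nat.factorial l :=
          Nat.dvd_factorial hp.pos (Nat.le_of_dvd hl hpl')
        exact_mod_cast this
      have ha1 : (p : ℤ) ∣ a - 1 := by simpa [ha] using hpl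
      have h2 : (p : ℤ) ^ (N - 1) ∣ ∑ i ∈ Finset.range ((p ^ N).totient), a ^ i := by
        rw [Nat.totient_prime_pow hp hN, splitsum]
        exact Dvd.dvd.mul_right (pow_dvd_geom_sum p ha1 (N - 1)) _
      have hNN : (p : ℤ) ^ N = p * (p : ℤ) ^ (N - 1) := by
        rw [← pow_succ']
        congr 1
        omega
      rw [hNN]
      exact mul_dvd_mul h1 (Dvd.dvd.mul_left h2 _)
    · have hpz : Prime (p : ℤ) := by
        rw [Int.prime_iff_natAbs_prime]; simpa using hp
      have ha1 : ¬ (p : ℤ) ∣ a - 1 := by simpa [ha] using hpl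
      have hco : IsCoprime ((p : ℤ) ^ N) (a - 1) :=
        (hpz.coprime_iff_not_dvd.mpr ha1).pow_left
      have heul : (p : ℤ) ^ N ∣ a ^ ((p ^ N).totient) - 1 := euler_int p hp hpa N hN
      have hmul : (p : ℤ) ^ N ∣ (∑ i ∈ Finset.range ((p ^ N).totient), a ^ i) * (a - 1) := by
        rw [geom_sum_mul]; exact heul
      have h2 : (p : ℤ) ^ N ∣ ∑ i ∈ Finset.range ((p ^ N).totient), a ^ i :=
        hco.dvd_of_dvd_mul_right hmul
      exact Dvd.dvd.mul_left (Dvd.dvd.mul_left h2 _) _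

/-- Vanishing of totient-length sums of double-indexed poly-Bernoulli numbers
along the first index. -/
theorem doublePolyBernoulli_sum_vanish_fst (k1 k2 N : ℕ)
    (hk1 : 0 < k1) (hk2 : 0 < k2) (hN : 0 < N) (p : ℕ) (hp : p.Prime)
    (n1 n2 : ℕ) (hn1 : N ≤ n1) (hn2 : N ≤ n2) :
    (∑ i ∈ Finset.range (Nat.totient (p ^ N)), B2negD (n1 + i) n2 k1 k2) ≡ 0
      [ZMOD (p : ℤ) ^ N] := by
  rw [Int.modEq_zero_iff_dvd]
  unfold B2negD
  rw [Finset.sum_comm]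
  apply Finset.dvd_sum
  intro l1 _
  rw [Finset.sum_comm]
  apply Finset.dvd_sum
  intro l2 _
  rcases Nat.eq_zero_or_pos l1 with h0 | hl1
  · subst h0
    have hz : (∑ h ∈ Finset.range (k1 + k2 + 1),
        (S2 h 0 : ℤ) * (S2 (k1 + k2 - h) l2 : ℤ) *
          (if k1 ≤ h then (Nat.choose k2 (h - k1) : ℤ) else 0)) = 0 := by
      apply Finset.sum_eq_zero
      intro h _
      match h with
      | 0 => rw [if_neg (by omega)]; ring
      | h + 1 => show ((S2 (h+1) 0 : ℤ)) * _ * _ = 0; rw [show S2 (h+1) 0 = 0 from rfl]; simp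
    simp only [hz, mul_zero, Finset.sum_const_zero]
    exact dvd_zero _
  · have hfac : (∑ i ∈ Finset.range ((p ^ N).totient),
        (-1 : ℤ) ^ (l1 + l2 + k1 + k2) * (Nat.factorial l1 : ℤ) * (Nat.factorial l2 : ℤ) *
          ((l1 : ℤ) + 1) ^ (n1 + i) * ((l1 : ℤ) + (l2 : ℤ) + 2) ^ n2 *
          ∑ h ∈ Finset.range (k1 + k2 + 1),
            (S2 h l1 : ℤ) * (S2 (k1 + k2 - h) l2 : ℤ) *
              (if k1 ≤ h then (Nat.choose k2 (h - k1) : ℤ) else 0))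
        = ((-1 : ℤ) ^ (l1 + l2 + k1 + k2) * (Nat.factorial l2 : ℤ) *
            ((l1 : ℤ) + (l2 : ℤ) + 2) ^ n2 *
            ∑ h ∈ Finset.range (k1 + k2 + 1),
              (S2 h l1 : ℤ) * (S2 (k1 + k2 - h) l2 : ℤ) *
                (if k1 ≤ h then (Nat.choose k2 (h - k1) : ℤ) else 0)) *
          ((Nat.factorial l1 : ℤ) *
            ∑ i ∈ Finset.range ((p ^ N).totient), ((l1 : ℤ) + 1) ^ (n1 + i)) := by
      calc (∑ i ∈ Finset.range ((p ^ N).totient),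
            (-1 : ℤ) ^ (l1 + l2 + k1 + k2) * (Nat.factorial l1 : ℤ) * (Nat.factorial l2 : ℤ) *
              ((l1 : ℤ) + 1) ^ (n1 + i) * ((l1 : ℤ) + (l2 : ℤ) + 2) ^ n2 *
              ∑ h ∈ Finset.range (k1 + k2 + 1),
                (S2 h l1 : ℤ) * (S2 (k1 + k2 - h) l2 : ℤ) *
                  (if k1 ≤ h then (Nat.choose k2 (h - k1) : ℤ) else 0))
          = ∑ i ∈ Finset.range ((p ^ N).totient),
              ((-1 : ℤ) ^ (l1 + l2 + k1 + k2) * (Nat.factorial l2 : ℤ) *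
                ((l1 : ℤ) + (l2 : ℤ) + 2) ^ n2 *
                ∑ h ∈ Finset.range (k1 + k2 + 1),
                  (S2 h l1 : ℤ) * (S2 (k1 + k2 - h) l2 : ℤ) *
                    (if k1 ≤ h then (Nat.choose k2 (h - k1) : ℤ) else 0)) *
                ((Nat.factorial l1 : ℤ) * ((l1 : ℤ) + 1) ^ (n1 + i)) :=
            Finset.sum_congr rfl fun i _ => by ring
        _ = _ := by
            rw [← Finset.mul_sum, ← Finset.mul_sum]
    rw [hfac]
    exact Dvd.dvd.mul_left (keydvd p N hp hN l1 n1 hl1 hn1) _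
end

section
/- Let k1, k2 be positive integers and M = p1^{e1} ... pm^{em} a factorization of a positive integer M into pairwise coprime prime powers. For any integers n1, n2 >= max(e1,...,em), sum_{i=0}^{φ(M)-1} B_{n1+i, n2}^{(-k1,-k2)} ≡ 0 (mod M). -/
/-- Key divisibility: for `l1 ≥ 1`,
`M ∣ l1! * (l1+1)^n1 * ∑_{i<φ(M)} (l1+1)^i`. -/
lemma key_dvd (m : ℕ) (p e : Fin m → ℕ) (hp : ∀ i, (p i).Prime)
    (hpinj : Function.Injective p) (M : ℕ) (hM : M = ∏ i, p i ^ e i)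
    (n1 : ℕ) (hn1 : ∀ i, e i ≤ n1) (l1 : ℕ) (hl1 : 1 ≤ l1) :
    (M : ℤ) ∣ (Nat.factorial l1 : ℤ) * ((l1 : ℤ) + 1) ^ n1 *
      ∑ i ∈ Finset.range (Nat.totient M), ((l1 : ℤ) + 1) ^ i := by
  have hMcast : (M : ℤ) = ∏ i, ((p i : ℤ)) ^ e i := by
    rw [hM]; push_cast; ring
  rw [hMcast]
  apply Finset.prod_dvd_of_coprime
  · intro i _ j _ hij
    apply IsCoprime.pow
    exact Nat.Coprime.isCoprime
      ((Nat.coprime_primes (hp i) (hp j)).mpr (fun h => hij (hpinj h)))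
  · intro i _
    by_cases hd : p i ∣ l1 + 1
    · -- p i divides l1+1, so p^e ∣ (l1+1)^n1
      have h1 : ((p i : ℤ)) ∣ ((l1 : ℤ) + 1) := by
        have := Int.natCast_dvd_natCast.mpr hd
        push_cast at this
        exact this
      have h2 : ((p i : ℤ)) ^ e i ∣ ((l1 : ℤ) + 1) ^ n1 :=
        dvd_trans (pow_dvd_pow_of_dvd h1 (e i)) (pow_dvd_pow _ (hn1 i))
      exact Dvd.dvd.mul_right (Dvd.dvd.mul_left h2 _) _
    · -- coprime case: p^e ∣ (l1+1)^{φ M} - 1 = (∑ x^i) * l1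
      have hcop : Nat.Coprime (l1 + 1) (p i ^ e i) :=
        Nat.Coprime.pow_right _ (((hp i).coprime_iff_not_dvd.mpr hd).symm)
      have heuler : (l1 + 1) ^ Nat.totient (p i ^ e i) ≡ 1 [MOD p i ^ e i] :=
        Nat.ModEq.pow_totient hcop
      have hdvdM : p i ^ e i ∣ M := hM ▸ Finset.dvd_prod_of_mem _ (Finset.mem_univ i)
      obtain ⟨t, ht⟩ := Nat.totient_dvd_of_dvd hdvdM
      have heuler2 : (l1 + 1) ^ Nat.totient M ≡ 1 [MOD p i ^ e i] := by
        rw [ht, pow_mul]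
        calc ((l1 + 1) ^ Nat.totient (p i ^ e i)) ^ t
            ≡ 1 ^ t [MOD p i ^ e i] := heuler.pow t
          _ = 1 := one_pow t
      have hdvd1 : ((p i : ℤ)) ^ e i ∣ ((l1 : ℤ) + 1) ^ Nat.totient M - 1 := by
        have h := Nat.modEq_iff_dvd.mp heuler2.symm
        push_cast at h
        exact h
      rw [← geom_sum_mul ((l1 : ℤ) + 1) (Nat.totient M)] at hdvd1
      have hsimp : ((l1 : ℤ) + 1 - 1) = (l1 : ℤ) := by ring
      rw [hsimp] at hdvd1
      -- now p^e ∣ (∑ x^i) * l1 and l1 ∣ l1!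
      obtain ⟨c, hc⟩ := hdvd1
      obtain ⟨d, hdfac⟩ : (l1 : ℤ) ∣ (Nat.factorial l1 : ℤ) :=
        Int.natCast_dvd_natCast.mpr (Nat.dvd_factorial hl1 le_rfl)
      refine ⟨c * d * ((l1 : ℤ) + 1) ^ n1, ?_⟩
      rw [hdfac]
      linear_combination (d * ((l1 : ℤ) + 1) ^ n1) * hc

/-- Vanishing of totient-length sums of double-indexed poly-Bernoulli numbers
modulo a general modulus `M = p1^{e1} ⋯ pm^{em}`. -/
theorem doublePolyBernoulli_sum_vanish_general (k1 k2 : ℕ)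
    (hk1 : 0 < k1) (hk2 : 0 < k2) (m : ℕ) (p e : Fin m → ℕ)
    (hp : ∀ i, (p i).Prime) (hpinj : Function.Injective p)
    (he : ∀ i, 0 < e i) (M : ℕ) (hM : M = ∏ i, p i ^ e i)
    (n1 n2 : ℕ) (hn1 : ∀ i, e i ≤ n1) (hn2 : ∀ i, e i ≤ n2) :
    (∑ i ∈ Finset.range (Nat.totient M), B2negD (n1 + i) n2 k1 k2) ≡ 0
      [ZMOD (M : ℤ)] := by
  have hdvd : (M : ℤ) ∣ ∑ i ∈ Finset.range (Nat.totient M), B2negD (n1 + i) n2 k1 k2 := by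
    simp only [B2negD]
    rw [Finset.sum_comm]
    apply Finset.dvd_sum
    intro l1 _
    rw [Finset.sum_comm]
    apply Finset.dvd_sum
    intro l2 _
    rcases Nat.eq_zero_or_pos l1 with h0 | hpos
    · -- l1 = 0 : the inner h-sum vanishes
      subst h0
      have hzero : (∑ h ∈ Finset.range (k1 + k2 + 1),
          (S2 h 0 : ℤ) * (S2 (k1 + k2 - h) l2 : ℤ) *
            (if k1 ≤ h then (Nat.choose k2 (h - k1) : ℤ) else 0)) = 0 := by
        apply Finset.sum_eq_zero
        intro h _
        match h with
        | 0 =>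
          rw [if_neg (by omega)]
          ring
        | Nat.succ h' =>
          show ((S2 (h' + 1) 0 : ℤ)) * _ * _ = 0
          have : S2 (h' + 1) 0 = 0 := rfl
          rw [this]
          push_cast; ring
      rw [hzero]
      simp
    · -- l1 ≥ 1 : factor out the geometric sum
      have hkey := key_dvd m p e hp hpinj M hM n1 hn1 l1 hpos
      have hfact : (∑ i ∈ Finset.range (Nat.totient M),
          (-1 : ℤ) ^ (l1 + l2 + k1 + k2) * (Nat.factorial l1 : ℤ) * (Nat.factorial l2 : ℤ) *
            ((l1 : ℤ) + 1) ^ (n1 + i) * ((l1 : ℤ) + (l2 : ℤ) + 2) ^ n2 *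
            ∑ h ∈ Finset.range (k1 + k2 + 1),
              (S2 h l1 : ℤ) * (S2 (k1 + k2 - h) l2 : ℤ) *
                (if k1 ≤ h then (Nat.choose k2 (h - k1) : ℤ) else 0)) =
          ((Nat.factorial l1 : ℤ) * ((l1 : ℤ) + 1) ^ n1 *
            ∑ i ∈ Finset.range (Nat.totient M), ((l1 : ℤ) + 1) ^ i) *
          ((-1 : ℤ) ^ (l1 + l2 + k1 + k2) * (Nat.factorial l2 : ℤ) *
            ((l1 : ℤ) + (l2 : ℤ) + 2) ^ n2 *
            ∑ h ∈ Finset.range (k1 + k2 + 1),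
              (S2 h l1 : ℤ) * (S2 (k1 + k2 - h) l2 : ℤ) *
                (if k1 ≤ h then (Nat.choose k2 (h - k1) : ℤ) else 0)) := by
        calc _ = ∑ i ∈ Finset.range (Nat.totient M), ((l1 : ℤ) + 1) ^ i *
              ((-1 : ℤ) ^ (l1 + l2 + k1 + k2) * (Nat.factorial l1 : ℤ) *
                (Nat.factorial l2 : ℤ) * ((l1 : ℤ) + 1) ^ n1 *
                ((l1 : ℤ) + (l2 : ℤ) + 2) ^ n2 *
                ∑ h ∈ Finset.range (k1 + k2 + 1),
                  (S2 h l1 : ℤ) * (S2 (k1 + k2 - h) l2 : ℤ) *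
                    (if k1 ≤ h then (Nat.choose k2 (h - k1) : ℤ) else 0)) := by
              apply Finset.sum_congr rfl
              intro i _
              rw [pow_add]
              ring
          _ = (∑ i ∈ Finset.range (Nat.totient M), ((l1 : ℤ) + 1) ^ i) *
              ((-1 : ℤ) ^ (l1 + l2 + k1 + k2) * (Nat.factorial l1 : ℤ) *
                (Nat.factorial l2 : ℤ) * ((l1 : ℤ) + 1) ^ n1 *
                ((l1 : ℤ) + (l2 : ℤ) + 2) ^ n2 *
                ∑ h ∈ Finset.range (k1 + k2 + 1),
                  (S2 h l1 : ℤ) * (S2 (k1 + k2 - h) l2 : ℤ) *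
                    (if k1 ≤ h then (Nat.choose k2 (h - k1) : ℤ) else 0)) := by
              rw [Finset.sum_mul]
          _ = _ := by ring
      rw [hfact]
      exact hkey.mul_right _
  exact (Int.modEq_iff_dvd.mpr (by simpa using hdvd)).symm
end
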